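/- Let P(λ) = A_mλᵐ + A_{m−1}λ^{m−1} + ⋯ + A₁λ + A₀ be an n×n quaternion matrix polynomial all of whose coefficients are (real) doubly stochastic matrices, with the leading coefficient A_m and the constant term A₀ being permutation matrices. If λ₀ ∈ ℍ is a right eigenvalue of P(λ), then 1/2 < |λ₀| < 2. -/

import Mathlib

open scoped Quaternion

noncomputable section

private lemma geom_upper_aux {t : ℝ} (ht : 2 ≤ t) (m : ℕ) :
    ∑ i ∈ Finset.range m, t ^ i ≤ t ^ m - 1 := by
  induction m with
  | zero => simp
  | succ m ih =>
    have h0 : (0:ℝ) ≤ t := by linarith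
    have hp : (0:ℝ) ≤ t ^ m := pow_nonneg h0 m
    have h2 : 2 * t ^ m ≤ t * t ^ m := mul_le_mul_of_nonneg_right ht hp
    rw [Finset.sum_range_succ, pow_succ]
    nlinarith

private lemma geom_lower_aux {t : ℝ} (h0 : 0 ≤ t) (ht : t ≤ 1 / 2) (m : ℕ) :
    ∑ i ∈ Finset.range m, t ^ (i + 1) ≤ 1 - (1 / 2 : ℝ) ^ m := by
  induction m with
  | zero => simp
  | succ m ih =>
    have hle : t ^ (m + 1) ≤ (1 / 2 : ℝ) ^ (m + 1) := pow_le_pow_left₀ h0 ht (m + 1)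
    have : ((1:ℝ) / 2) ^ (m + 1) = (1 / 2) ^ m * (1 / 2) := pow_succ _ _
    rw [Finset.sum_range_succ]
    rw [this] at hle ⊢
    linarith

/-- If all coefficients of the quaternion matrix polynomial `P(λ) = ∑ Aᵢ λⁱ` are (real)
doubly stochastic matrices, with the leading coefficient `A_m` and the constant term `A₀`
permutation matrices, and `λ₀` is a right eigenvalue of `P`
(i.e. `∑ i, Aᵢ x λ₀ⁱ = 0` for some nonzero `x`), then `1/2 < |λ₀| < 2`. -/
theorem right_eigenvalue_bound_doubly_stochastic {m n : ℕ}
    (B : Fin (m + 1) → Matrix (Fin n) (Fin n) ℝ)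
    (hds : ∀ i, B i ∈ doublyStochastic ℝ (Fin n))
    (hlead : ∃ σ : Equiv.Perm (Fin n), B (Fin.last m) = σ.permMatrix ℝ)
    (hconst : ∃ σ : Equiv.Perm (Fin n), B 0 = σ.permMatrix ℝ)
    (q : ℍ[ℝ])
    (heig : ∃ x : Fin n → ℍ[ℝ], x ≠ 0 ∧
      ∀ k, ∑ i : Fin (m + 1),
        ((B i).map (fun a => (a : ℍ[ℝ]))).mulVec x k * q ^ (i : ℕ) = 0) :
    1 / 2 < ‖q‖ ∧ ‖q‖ < 2 := by
  obtain ⟨x, hx0, heq⟩ := heig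
  obtain ⟨k0, hk0⟩ := Function.ne_iff.mp hx0
  -- the maximal modulus of an entry of x
  obtain ⟨j0, -, hj0⟩ := Finset.univ.exists_max_image (fun j => ‖x j‖)
    ⟨k0, Finset.mem_univ k0⟩
  set M : ℝ := ‖x j0‖ with hMdef
  have hM : ∀ j, ‖x j‖ ≤ M := fun j => hj0 j (Finset.mem_univ j)
  have hMpos : 0 < M := lt_of_lt_of_le (norm_pos_iff.mpr hk0) (hM k0)
  -- computing rows
  have hrow_eq : ∀ (A : Matrix (Fin n) (Fin n) ℝ) (k : Fin n),
      (A.map (fun a => (a : ℍ[ℝ]))).mulVec x k = ∑ j, (A k j : ℍ[ℝ]) * x j := by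
    intro A k
    simp [Matrix.mulVec, dotProduct, Matrix.map_apply]
  -- each row of a doubly stochastic coefficient applied to x has norm ≤ M
  have hrow : ∀ (i : Fin (m + 1)) (k : Fin n),
      ‖((B i).map (fun a => (a : ℍ[ℝ]))).mulVec x k‖ ≤ M := by
    intro i k
    rw [hrow_eq]
    calc ‖∑ j, ((B i k j : ℝ) : ℍ[ℝ]) * x j‖ ≤ ∑ j, ‖((B i k j : ℝ) : ℍ[ℝ]) * x j‖ :=
          norm_sum_le _ _
      _ = ∑ j, B i k j * ‖x j‖ := by
          refine Finset.sum_congr rfl fun j _ => ?_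
          rw [norm_mul, Quaternion.norm_coe, Real.norm_eq_abs,
            abs_of_nonneg (nonneg_of_mem_doublyStochastic (hds i))]
      _ ≤ ∑ j, B i k j * M := by
          refine Finset.sum_le_sum fun j _ => ?_
          exact mul_le_mul_of_nonneg_left (hM j) (nonneg_of_mem_doublyStochastic (hds i))
      _ = M := by rw [← Finset.sum_mul, sum_row_of_mem_doublyStochastic (hds i), one_mul]
  -- permutation rows pick out an entry of x
  have hperm_row : ∀ (σ : Equiv.Perm (Fin n)) (k : Fin n),
      ((σ.permMatrix ℝ).map (fun a => (a : ℍ[ℝ]))).mulVec x k = x (σ k) := by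
    intro σ k
    simp [Matrix.mulVec, Matrix.map_apply, Equiv.Perm.permMatrix, PEquiv.toMatrix_apply,
      dotProduct, apply_ite, Equiv.toPEquiv_apply]
  have hqnn : (0:ℝ) ≤ ‖q‖ := norm_nonneg q
  constructor
  · -- lower bound, using the constant coefficient
    by_contra hcon
    push_neg at hcon
    obtain ⟨σ, hσ⟩ := hconst
    set k : Fin n := σ⁻¹ j0 with hk
    have h0row : ((B 0).map (fun a => (a : ℍ[ℝ]))).mulVec x k = x j0 := by
      rw [hσ, hperm_row]; exact congrArg x (σ.apply_symm_apply j0)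
    have hk' := heq k
    rw [Fin.sum_univ_succ] at hk'
    have hx0eq : x j0 = -∑ i : Fin m,
        ((B i.succ).map (fun a => (a : ℍ[ℝ]))).mulVec x k * q ^ ((i : ℕ) + 1) := by
      rw [eq_neg_iff_add_eq_zero, ← hk']
      simp [h0row, Fin.val_succ]
    have hnorm : M ≤ ∑ i : Fin m, M * ‖q‖ ^ ((i : ℕ) + 1) := by
      calc M = ‖x j0‖ := rfl
        _ = ‖∑ i : Fin m,
            ((B i.succ).map (fun a => (a : ℍ[ℝ]))).mulVec x k * q ^ ((i : ℕ) + 1)‖ := by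
            rw [hx0eq, norm_neg]
        _ ≤ ∑ i : Fin m, ‖((B i.succ).map (fun a => (a : ℍ[ℝ]))).mulVec x k *
              q ^ ((i : ℕ) + 1)‖ := norm_sum_le _ _
        _ ≤ ∑ i : Fin m, M * ‖q‖ ^ ((i : ℕ) + 1) := by
            refine Finset.sum_le_sum fun i _ => ?_
            rw [norm_mul, norm_pow]
            exact mul_le_mul_of_nonneg_right (hrow _ _) (pow_nonneg hqnn _)
    have hsum : ∑ i : Fin m, M * ‖q‖ ^ ((i : ℕ) + 1)
        = M * ∑ i ∈ Finset.range m, ‖q‖ ^ (i + 1) := by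
      rw [Finset.mul_sum, Fin.sum_univ_eq_sum_range (fun i => M * ‖q‖ ^ (i + 1)) m]
    have hgeo := geom_lower_aux hqnn hcon m
    have hpow : (0:ℝ) < (1 / 2 : ℝ) ^ m := by positivity
    have : M ≤ M * (1 - (1 / 2 : ℝ) ^ m) := by
      calc M ≤ M * ∑ i ∈ Finset.range m, ‖q‖ ^ (i + 1) := by rw [← hsum]; exact hnorm
        _ ≤ M * (1 - (1 / 2 : ℝ) ^ m) := mul_le_mul_of_nonneg_left hgeo hMpos.le
    nlinarith
  · -- upper bound, using the leading coefficient
    by_contra hcon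
    push_neg at hcon
    obtain ⟨σ, hσ⟩ := hlead
    set k : Fin n := σ⁻¹ j0 with hk
    have h0row : ((B (Fin.last m)).map (fun a => (a : ℍ[ℝ]))).mulVec x k = x j0 := by
      rw [hσ, hperm_row]; exact congrArg x (σ.apply_symm_apply j0)
    have hk' := heq k
    rw [Fin.sum_univ_castSucc] at hk'
    have hx0eq : x j0 * q ^ m = -∑ i : Fin m,
        ((B i.castSucc).map (fun a => (a : ℍ[ℝ]))).mulVec x k * q ^ (i : ℕ) := by
      rw [eq_neg_iff_add_eq_zero, ← hk']
      simp [h0row, Fin.coe_castSucc, Fin.val_last]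
      exact add_comm _ _
    have hnorm : M * ‖q‖ ^ m ≤ ∑ i : Fin m, M * ‖q‖ ^ (i : ℕ) := by
      calc M * ‖q‖ ^ m = ‖x j0 * q ^ m‖ := by rw [norm_mul, norm_pow]
        _ = ‖∑ i : Fin m,
            ((B i.castSucc).map (fun a => (a : ℍ[ℝ]))).mulVec x k * q ^ (i : ℕ)‖ := by
            rw [hx0eq, norm_neg]
        _ ≤ ∑ i : Fin m, ‖((B i.castSucc).map (fun a => (a : ℍ[ℝ]))).mulVec x k *
              q ^ (i : ℕ)‖ := norm_sum_le _ _
        _ ≤ ∑ i : Fin m, M * ‖q‖ ^ (i : ℕ) := by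
            refine Finset.sum_le_sum fun i _ => ?_
            rw [norm_mul, norm_pow]
            exact mul_le_mul_of_nonneg_right (hrow _ _) (pow_nonneg hqnn _)
    have hsum : ∑ i : Fin m, M * ‖q‖ ^ (i : ℕ)
        = M * ∑ i ∈ Finset.range m, ‖q‖ ^ i := by
      rw [Finset.mul_sum, Fin.sum_univ_eq_sum_range (fun i => M * ‖q‖ ^ i) m]
    have hgeo := geom_upper_aux hcon m
    have : M * ‖q‖ ^ m ≤ M * (‖q‖ ^ m - 1) := by
      calc M * ‖q‖ ^ m ≤ M * ∑ i ∈ Finset.range m, ‖q‖ ^ i := by rw [← hsum]; exact hnorm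
        _ ≤ M * (‖q‖ ^ m - 1) := mul_le_mul_of_nonneg_left hgeo hMpos.le
    nlinarith
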